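/- Let A ∈ ℤ^{m×n} with 1 ≤ m < n satisfy the regularity assumptions, let s ≥ 1 be an integer, let v = A·1, and let L_A^⊥ = {z ∈ ℤ^n : A z = 0}. Then g_s(A) ≤ μ_s(P(A, v) − 1, L_A^⊥), where P(A, v) − 1 denotes the translate of the knapsack polytope P(A, v) by the negative of the all-ones vector, a convex body contained in the real span of L_A^⊥. -/

import Mathlib

open scoped BigOperators
open Matrix

noncomputable section

/-- The real matrix obtained from an integer matrix. -/
def Rmat {m n : ℕ} (A : Matrix (Fin m) (Fin n) ℤ) : Matrix (Fin m) (Fin n) ℝ :=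
  A.map (Int.cast : ℤ → ℝ)

/-- The real vector obtained from an integer vector. -/
def Rvec {m : ℕ} (b : Fin m → ℤ) : Fin m → ℝ := fun i => (b i : ℝ)

/-- The knapsack polytope P(A,b) = {x ≥ 0 : A x = b}. -/
def knap {m n : ℕ} (A : Matrix (Fin m) (Fin n) ℤ) (b : Fin m → ℝ) : Set (Fin n → ℝ) :=
  {x | (∀ i, 0 ≤ x i) ∧ (Rmat A).mulVec x = b}

/-- The set F_s(A) of integer vectors b for which P(A,b) contains at least s integer points. -/
def feas {m n : ℕ} (s : ℕ) (A : Matrix (Fin m) (Fin n) ℤ) : Set (Fin m → ℤ) :=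
  {b | s ≤ Set.ncard {x : Fin n → ℤ | (∀ i, 0 ≤ x i) ∧ A.mulVec x = b}}

/-- The cone generated by the columns of A. -/
def coneOf {m n : ℕ} (A : Matrix (Fin m) (Fin n) ℤ) : Set (Fin m → ℝ) :=
  {y | ∃ x : Fin n → ℝ, (∀ i, 0 ≤ x i) ∧ (Rmat A).mulVec x = y}

/-- The generalized diagonal s-Frobenius number g_s(A, w). -/
def gDiag {m n : ℕ} (s : ℕ) (A : Matrix (Fin m) (Fin n) ℤ) (w : Fin m → ℝ) : ℝ :=
  sInf {t : ℝ | 0 ≤ t ∧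
    ∀ b : Fin m → ℤ, Rvec b ∈ interior ((fun c => t • w + c) '' coneOf A) → b ∈ feas s A}

/-- v = A·1 is the sum of the columns of A (as a real vector). -/
def vA {m n : ℕ} (A : Matrix (Fin m) (Fin n) ℤ) : Fin m → ℝ :=
  (Rmat A).mulVec (fun _ => 1)

/-- The diagonal s-Frobenius number g_s(A) = g_s(A, A·1). -/
def gFrob {m n : ℕ} (s : ℕ) (A : Matrix (Fin m) (Fin n) ℤ) : ℝ := gDiag s A (vA A)

/-- The regularity assumptions: the m×m minors of A have gcd 1, and the only
nonnegative real solution of A x = 0 is x = 0. -/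
def regular {m n : ℕ} (A : Matrix (Fin m) (Fin n) ℤ) : Prop :=
  Finset.univ.gcd (fun I : Fin m ↪ Fin n => (A.submatrix id ⇑I).det) = 1 ∧
  ∀ x : Fin n → ℝ, (∀ i, 0 ≤ x i) → (Rmat A).mulVec x = 0 → x = 0

/-- The s-covering radius of K with respect to L: the smallest μ > 0 such that every
point of the real span of L lies in y + μK for at least s distinct y ∈ L. -/
def muCov {N : ℕ} (s : ℕ) (K L : Set (Fin N → ℝ)) : ℝ :=
  sInf {μ : ℝ | 0 < μ ∧ ∀ x ∈ Submodule.span ℝ L,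
    ∃ T : Finset (Fin N → ℝ), ↑T ⊆ L ∧ s ≤ T.card ∧ ∀ y ∈ T, ∃ k ∈ K, x = y + μ • k}

/-- The set of absolute values of m×m minors of A. -/
def minorAbs {m n : ℕ} (A : Matrix (Fin m) (Fin n) ℤ) : Set ℤ :=
  {d | ∃ I : Fin m ↪ Fin n, d = |(A.submatrix id ⇑I).det|}

/-- m(A): the minimal absolute m×m minor of A. -/
def mMin {m n : ℕ} (A : Matrix (Fin m) (Fin n) ℤ) : ℤ := sInf (minorAbs A)

/-- M(A): the maximal absolute m×m minor of A. -/
def mMax {m n : ℕ} (A : Matrix (Fin m) (Fin n) ℤ) : ℤ := sSup (minorAbs A)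

/-- The lattice L_A^⊥ = {z ∈ ℤ^n : A z = 0}, viewed as a subset of ℝ^n. -/
def kerLat {m n : ℕ} (A : Matrix (Fin m) (Fin n) ℤ) : Set (Fin n → ℝ) :=
  {x | ∃ z : Fin n → ℤ, A.mulVec z = 0 ∧ x = Rvec z}

/-- √(det (A Aᵀ)). -/
def sqrtDet {m n : ℕ} (A : Matrix (Fin m) (Fin n) ℤ) : ℝ :=
  Real.sqrt (((A * Aᵀ).det : ℤ) : ℝ)

/-- The s-Frobenius number of a positive primitive integer vector. -/
def sFrob {n : ℕ} (s : ℕ) (a : Fin n → ℤ) : ℤ :=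
  sSup {b : ℤ | Set.ncard {x : Fin n → ℤ | (∀ i, 0 ≤ x i) ∧ ∑ i, a i * x i = b} < s}

/-- The full-rank lattice in ℝ^d with basis the columns of an invertible matrix B. -/
def latSet {d : ℕ} (B : Matrix (Fin d) (Fin d) ℝ) : Set (Fin d → ℝ) :=
  {x | ∃ z : Fin d → ℤ, x = B.mulVec (fun i => (z i : ℝ))}

/-- The absolute s-inhomogeneous minimum ϑ_s(K) = inf_L μ_s(K,L)/det(L)^{1/d}. -/
def theta (s d : ℕ) (K : Set (Fin d → ℝ)) : ℝ :=
  sInf {r : ℝ | ∃ B : Matrix (Fin d) (Fin d) ℝ, B.det ≠ 0 ∧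
    r = muCov s K (latSet B) / |B.det| ^ ((1 : ℝ) / d)}

/-- The standard simplex S_d ⊂ ℝ^d. -/
def stdSimplex' (d : ℕ) : Set (Fin d → ℝ) :=
  {x | (∀ i, 0 ≤ x i) ∧ ∑ i, x i ≤ 1}

lemma gcd_bezout {ι : Type*} [DecidableEq ι] (F : Finset ι) (f : ι → ℤ) :
    ∃ c : ι → ℤ, ∑ i ∈ F, c i * f i = F.gcd f := by
  classical
  induction F using Finset.induction_on with
  | empty => exact ⟨0, by simp⟩
  | insert a F ha ih =>
    obtain ⟨c, hc⟩ := ih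
    refine ⟨fun i => if i = a then Int.gcdA (f a) (F.gcd f) else
      c i * Int.gcdB (f a) (F.gcd f), ?_⟩
    rw [Finset.gcd_insert, Finset.sum_insert ha]
    have h2 : (gcd (f a) (F.gcd f) : ℤ) = f a * Int.gcdA (f a) (F.gcd f)
        + (F.gcd f) * Int.gcdB (f a) (F.gcd f) := by
      rw [← Int.gcd_eq_gcd_ab]; rfl
    have h3 : ∀ i ∈ F, (if i = a then Int.gcdA (f a) (F.gcd f) else
        c i * Int.gcdB (f a) (F.gcd f)) * f i = c i * f i * Int.gcdB (f a) (F.gcd f) := by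
      intro i hi
      rw [if_neg (by rintro rfl; exact ha hi)]; ring
    beta_reduce
    rw [if_pos rfl, Finset.sum_congr rfl h3, ← Finset.sum_mul, hc, h2]
    ring

section Aux
variable {m n : ℕ} (A : Matrix (Fin m) (Fin n) ℤ)

/-- cast commutation -/
lemma Rmat_mulVec (z : Fin n → ℤ) : (Rmat A).mulVec (Rvec z) = Rvec (A.mulVec z) := by
  funext k
  simp [Rmat, Rvec, Matrix.mulVec, dotProduct]

/-- lift a vector on Fin m to Fin n along an embedding -/
noncomputable def liftI (I : Fin m ↪ Fin n) (u : Fin m → ℤ) : Fin n → ℤ :=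
  fun j => if h : ∃ i, I i = j then u h.choose else 0

lemma liftI_apply (I : Fin m ↪ Fin n) (u : Fin m → ℤ) (i : Fin m) :
    liftI I u (I i) = u i := by
  have h : ∃ i', I i' = I i := ⟨i, rfl⟩
  have := h.choose_spec
  simp only [liftI, dif_pos h]
  exact congrArg u (I.injective this)

lemma liftI_apply_not (I : Fin m ↪ Fin n) (u : Fin m → ℤ) (j : Fin n)
    (hj : ¬ ∃ i, I i = j) : liftI I u j = 0 := by
  simp only [liftI, dif_neg hj]

lemma mulVec_liftI (I : Fin m ↪ Fin n) (u : Fin m → ℤ) :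
    A.mulVec (liftI I u) = (A.submatrix id ⇑I).mulVec u := by
  funext k
  simp only [Matrix.mulVec, dotProduct, Matrix.submatrix_apply, id]
  have h1 : ∑ j : Fin n, A k j * liftI I u j = ∑ j ∈ Finset.univ.map I, A k j * liftI I u j := by
    refine (Finset.sum_subset (Finset.subset_univ _) ?_).symm
    intro j _ hj
    rw [liftI_apply_not I u j (by simpa [Finset.mem_map] using hj), mul_zero]
  rw [h1, Finset.sum_map]
  exact Finset.sum_congr rfl fun i _ => by rw [liftI_apply]


lemma mulVec_det_smul (I : Fin m ↪ Fin n) (b : Fin m → ℤ) :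
    A.mulVec (liftI I ((A.submatrix id ⇑I).adjugate.mulVec b))
      = (A.submatrix id ⇑I).det • b := by
  rw [mulVec_liftI, Matrix.mulVec_mulVec, Matrix.mul_adjugate, Matrix.smul_mulVec,
    Matrix.one_mulVec]

lemma exists_int_solution
    (hgcd : Finset.univ.gcd (fun I : Fin m ↪ Fin n => (A.submatrix id ⇑I).det) = 1)
    (b : Fin m → ℤ) : ∃ w : Fin n → ℤ, A.mulVec w = b := by
  classical
  obtain ⟨c, hc⟩ := gcd_bezout (Finset.univ : Finset (Fin m ↪ Fin n))
    (fun I => (A.submatrix id ⇑I).det)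
  rw [hgcd] at hc
  refine ⟨∑ I : Fin m ↪ Fin n, c I • liftI I ((A.submatrix id ⇑I).adjugate.mulVec b), ?_⟩
  have : A.mulVecLin (∑ I : Fin m ↪ Fin n, c I • liftI I ((A.submatrix id ⇑I).adjugate.mulVec b))
      = ∑ I : Fin m ↪ Fin n, c I • A.mulVecLin (liftI I ((A.submatrix id ⇑I).adjugate.mulVec b)) := by
    rw [map_sum]
    exact Finset.sum_congr rfl fun I _ => by rw [_root_.map_smul]
  rw [show A.mulVec _ = A.mulVecLin _ from rfl, this]
  have h2 : ∀ I : Fin m ↪ Fin n, A.mulVecLin (liftI I ((A.submatrix id ⇑I).adjugate.mulVec b))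
      = (A.submatrix id ⇑I).det • b := fun I => mulVec_det_smul A I b
  rw [Finset.sum_congr rfl fun I _ => by rw [h2 I]]
  have : ∑ I : Fin m ↪ Fin n, c I • (A.submatrix id ⇑I).det • b
      = (∑ I : Fin m ↪ Fin n, c I * (A.submatrix id ⇑I).det) • b := by
    rw [Finset.sum_smul]
    exact Finset.sum_congr rfl fun I _ => by rw [smul_smul]
  rw [this]
  have h3 : ∑ I : Fin m ↪ Fin n, c I * (A.submatrix id ⇑I).det = 1 := hc
  rw [h3, one_smul]



/-- Kernel basis vectors attached to a nonvanishing minor. -/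
noncomputable def zKer (I : Fin m ↪ Fin n) (j : Fin n) : Fin n → ℤ :=
  (A.submatrix id ⇑I).det • Pi.single j 1
    - liftI I ((A.submatrix id ⇑I).adjugate.mulVec (fun k => A k j))

lemma mulVec_zKer (I : Fin m ↪ Fin n) (j : Fin n) : A.mulVec (zKer A I j) = 0 := by
  unfold zKer
  rw [Matrix.mulVec_sub, Matrix.mulVec_smul, Matrix.mulVec_single_one, mulVec_liftI,
    Matrix.mulVec_mulVec, Matrix.mul_adjugate, Matrix.smul_mulVec, Matrix.one_mulVec]
  funext k
  simp

lemma zKer_outside (I : Fin m ↪ Fin n) (j j' : Fin n) (hj' : ¬ ∃ i, I i = j') :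
    zKer A I j j' = (A.submatrix id ⇑I).det * (if j' = j then 1 else 0) := by
  unfold zKer
  rw [Pi.sub_apply, liftI_apply_not _ _ _ hj', Pi.smul_apply, Pi.single_apply]
  simp [mul_comm]

lemma ker_decomp (I : Fin m ↪ Fin n) (hD : (A.submatrix id ⇑I).det ≠ 0)
    (d : Fin n → ℝ) (hd : (Rmat A).mulVec d = 0) :
    d = ∑ j ∈ (Finset.univ.map I)ᶜ,
      (d j / ((A.submatrix id ⇑I).det : ℝ)) • Rvec (zKer A I j) := by
  classical
  set D : ℤ := (A.submatrix id ⇑I).det with hDdef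
  set Jc : Finset (Fin n) := (Finset.univ.map I)ᶜ with hJc
  set e : Fin n → ℝ := d - ∑ j ∈ Jc, (d j / (D : ℝ)) • Rvec (zKer A I j) with he
  have hnotmem : ∀ j' : Fin n, j' ∈ Jc ↔ ¬ ∃ i, I i = j' := by
    intro j'
    simp [hJc, Finset.mem_compl, Finset.mem_map]
  have ha : ∀ j' ∈ Jc, e j' = 0 := by
    intro j' hj'
    have hsum : ∀ j ∈ Jc, ((d j / (D : ℝ)) • Rvec (zKer A I j)) j'
        = if j' = j then d j' else 0 := by
      intro j hj
      rw [Pi.smul_apply, smul_eq_mul]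
      unfold Rvec
      rw [zKer_outside A I j j' ((hnotmem j').1 hj')]
      by_cases hjj : j' = j
      · subst hjj
        simp only [if_pos rfl, mul_one]
        rw [← hDdef]
        push_cast
        field_simp
      · simp [hjj]
    have : (∑ j ∈ Jc, (d j / (D : ℝ)) • Rvec (zKer A I j)) j'
        = ∑ j ∈ Jc, if j' = j then d j' else 0 := by
      rw [Finset.sum_apply]
      exact Finset.sum_congr rfl hsum
    rw [he, Pi.sub_apply, this, Finset.sum_ite_eq, if_pos hj', sub_self]
  have hbker : ∀ j ∈ Jc, (Rmat A).mulVec ((d j / (D : ℝ)) • Rvec (zKer A I j)) = 0 := by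
    intro j _
    rw [Matrix.mulVec_smul, Rmat_mulVec, mulVec_zKer]
    funext k
    simp [Rvec]
  have hekernel : (Rmat A).mulVec e = 0 := by
    rw [he, Matrix.mulVec_sub, hd]
    have : (Rmat A).mulVec (∑ j ∈ Jc, (d j / (D : ℝ)) • Rvec (zKer A I j))
        = ∑ j ∈ Jc, (Rmat A).mulVec ((d j / (D : ℝ)) • Rvec (zKer A I j)) := by
      rw [show ∀ v, (Rmat A).mulVec v = (Rmat A).mulVecLin v from fun _ => rfl, map_sum]
      exact Finset.sum_congr rfl fun j _ => rfl
    rw [this, Finset.sum_congr rfl hbker, Finset.sum_const_zero]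
    simp
  have heI : ∀ i : Fin m, e (I i) = 0 := by
    have hBker : (Rmat (A.submatrix id ⇑I)).mulVec (fun i => e (I i)) = 0 := by
      funext k
      simp only [Pi.zero_apply]
      have h0 : ((Rmat A).mulVec e) k = 0 := by rw [hekernel]; rfl
      rw [← h0]
      simp only [Rmat, Matrix.mulVec, dotProduct, Matrix.map_apply,
        Matrix.submatrix_apply, id]
      rw [← Finset.sum_map Finset.univ I (fun j => ((A k j : ℤ) : ℝ) * e j)]
      refine Finset.sum_subset (Finset.subset_univ _) ?_
      intro j _ hj
      have : j ∈ Jc := by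
        rw [hnotmem]
        simpa [Finset.mem_map] using hj
      rw [ha j this, mul_zero]
    have hdet : (Rmat (A.submatrix id ⇑I)).det ≠ 0 := by
      have : (Rmat (A.submatrix id ⇑I)).det = ((D : ℤ) : ℝ) := by
        rw [hDdef, show Rmat (A.submatrix id ⇑I) = (Int.castRingHom ℝ).mapMatrix (A.submatrix id ⇑I) from rfl,
          ← RingHom.map_det]
        rfl
      rw [this]
      exact_mod_cast hD
    have := Matrix.eq_zero_of_mulVec_eq_zero hdet hBker
    intro i
    exact congrFun this i
  have : e = 0 := by
    funext j'
    by_cases hj' : ∃ i, I i = j'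
    · obtain ⟨i, rfl⟩ := hj'
      exact heI i
    · exact ha j' ((hnotmem j').2 hj')
  have h0 : d - ∑ j ∈ Jc, (d j / (D : ℝ)) • Rvec (zKer A I j) = 0 := by
    rw [← he]; exact this
  exact sub_eq_zero.mp h0

lemma exists_I0 (hgcd : Finset.univ.gcd (fun I : Fin m ↪ Fin n => (A.submatrix id ⇑I).det) = 1) :
    ∃ I : Fin m ↪ Fin n, (A.submatrix id ⇑I).det ≠ 0 := by
  by_contra h
  push_neg at h
  have : Finset.univ.gcd (fun I : Fin m ↪ Fin n => (A.submatrix id ⇑I).det) = 0 :=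
    Finset.gcd_eq_zero_iff.2 fun I _ => h I
  rw [hgcd] at this
  exact one_ne_zero this

lemma span_kerLat_ker : ∀ x ∈ Submodule.span ℝ (kerLat A), (Rmat A).mulVec x = 0 := by
  intro x hx
  have hsub : kerLat A ⊆ (LinearMap.ker (Rmat A).mulVecLin : Set (Fin n → ℝ)) := by
    rintro _ ⟨z, hz, rfl⟩
    simp only [SetLike.mem_coe, LinearMap.mem_ker]
    show (Rmat A).mulVec (Rvec z) = 0
    rw [Rmat_mulVec, hz]
    funext k
    simp [Rvec]
  have := Submodule.span_le.2 hsub hx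
  exact LinearMap.mem_ker.1 this

lemma ker_mem_span (I : Fin m ↪ Fin n) (hD : (A.submatrix id ⇑I).det ≠ 0)
    (d : Fin n → ℝ) (hd : (Rmat A).mulVec d = 0) : d ∈ Submodule.span ℝ (kerLat A) := by
  rw [ker_decomp A I hD d hd]
  refine Submodule.sum_mem _ fun j _ => Submodule.smul_mem _ _ (Submodule.subset_span ?_)
  exact ⟨zKer A I j, mulVec_zKer A I j, rfl⟩

lemma mem_K_iff (k : Fin n → ℝ) :
    k ∈ ((fun x => x - fun _ => (1 : ℝ)) '' knap A (vA A)) ↔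
      (∀ i, -1 ≤ k i) ∧ (Rmat A).mulVec k = 0 := by
  constructor
  · rintro ⟨x, ⟨hx0, hxA⟩, rfl⟩
    constructor
    · intro i
      simp only [Pi.sub_apply]
      linarith [hx0 i]
    · rw [Matrix.mulVec_sub, hxA]
      show vA A - (Rmat A).mulVec (fun _ => 1) = 0
      rw [show (Rmat A).mulVec (fun _ => 1) = vA A from rfl, sub_self]
  · rintro ⟨hk1, hk0⟩
    refine ⟨k + fun _ => 1, ⟨fun i => by simpa using by linarith [hk1 i], ?_⟩, by funext i; simp⟩
    rw [Matrix.mulVec_add, hk0, zero_add]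
    rfl

lemma sol_finite (hn : 0 < n)
    (hpos : ∀ x : Fin n → ℝ, (∀ i, 0 ≤ x i) → (Rmat A).mulVec x = 0 → x = 0)
    (b : Fin m → ℤ) :
    {x : Fin n → ℤ | (∀ i, 0 ≤ x i) ∧ A.mulVec x = b}.Finite := by
  classical
  haveI : NeZero n := ⟨hn.ne'⟩
  set S : Set (Fin n → ℝ) := {x | (∀ i, 0 ≤ x i) ∧ ∑ i, x i = 1} with hS
  -- S is compact
  have hSsub : S ⊆ Set.Icc (0 : Fin n → ℝ) 1 := by
    rintro x ⟨hx0, hx1⟩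
    refine ⟨fun i => hx0 i, fun i => ?_⟩
    calc x i ≤ ∑ j, x j := Finset.single_le_sum (fun j _ => hx0 j) (Finset.mem_univ i)
    _ = 1 := hx1
  have hSclosed : IsClosed S := by
    have h1 : IsClosed {x : Fin n → ℝ | ∀ i, 0 ≤ x i} := by
      have : {x : Fin n → ℝ | ∀ i, 0 ≤ x i} = ⋂ i, {x | 0 ≤ x i} := by
        ext x; simp
      rw [this]
      exact isClosed_iInter fun i => isClosed_le continuous_const (continuous_apply i)
    have h2 : IsClosed {x : Fin n → ℝ | ∑ i, x i = 1} :=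
      isClosed_eq (continuous_finset_sum Finset.univ fun i _ => (continuous_apply i : Continuous fun x : Fin n → ℝ => x i)) continuous_const
    exact h1.inter h2
  have hScompact : IsCompact S := (isCompact_Icc).of_isClosed_subset hSclosed hSsub
  have hSne : S.Nonempty := by
    refine ⟨fun _ => 1 / n, fun i => by positivity, ?_⟩
    rw [Finset.sum_const, Finset.card_univ, Fintype.card_fin, nsmul_eq_mul]
    field_simp
  -- the function f
  set f : (Fin n → ℝ) → ℝ := fun x => ∑ k, |((Rmat A).mulVec x) k| with hf
  have hfcont : Continuous f := by
    have hcomp : ∀ k : Fin m, Continuous fun x : Fin n → ℝ => ((Rmat A).mulVec x) k := by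
      intro k
      show Continuous fun x : Fin n → ℝ => ∑ j, Rmat A k j * x j
      exact continuous_finset_sum Finset.univ fun j _ =>
        continuous_const.mul (continuous_apply j)
    exact continuous_finset_sum Finset.univ fun k _ => (hcomp k).abs
  obtain ⟨x0, hx0S, hmin⟩ := hScompact.exists_isMinOn hSne hfcont.continuousOn
  set c : ℝ := f x0 with hc
  have hcpos : 0 < c := by
    rcases lt_or_eq_of_le (show (0:ℝ) ≤ c from Finset.sum_nonneg fun k _ => abs_nonneg _) with h | h
    · exact h
    · exfalso
      have hker : (Rmat A).mulVec x0 = 0 := by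
        funext k
        have : ∀ k' ∈ Finset.univ, |((Rmat A).mulVec x0) k'| = 0 := by
          have := (Finset.sum_eq_zero_iff_of_nonneg (fun k' _ => abs_nonneg _)).1 h.symm
          exact this
        simpa using abs_eq_zero.1 (this k (Finset.mem_univ k))
      have := hpos x0 hx0S.1 hker
      rw [this] at hx0S
      simpa using hx0S.2
  set Fb : ℝ := ∑ k, |((b k : ℤ) : ℝ)| with hFb
  set C : ℝ := max (Fb / c) 0 with hC
  have key : ∀ x : Fin n → ℤ, (∀ i, 0 ≤ x i) → A.mulVec x = b → ∀ i, (x i : ℝ) ≤ C := by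
    intro x hx0 hxb i
    set X : Fin n → ℝ := Rvec x with hX
    have hX0 : ∀ i, 0 ≤ X i := fun i => by
      show (0:ℝ) ≤ (x i : ℝ)
      exact_mod_cast hx0 i
    have hXb : (Rmat A).mulVec X = Rvec b := by rw [hX, Rmat_mulVec, hxb]
    set t : ℝ := ∑ j, X j with ht
    have ht0 : 0 ≤ t := Finset.sum_nonneg fun j _ => hX0 j
    have hxi_le_t : X i ≤ t := Finset.single_le_sum (fun j _ => hX0 j) (Finset.mem_univ i)
    rcases eq_or_lt_of_le ht0 with h | h
    · -- t = 0 so X = 0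
      have hXi : X i = 0 := le_antisymm (h ▸ hxi_le_t) (hX0 i)
      show (x i : ℝ) ≤ C
      calc ((x i : ℤ) : ℝ) = X i := rfl
      _ = 0 := hXi
      _ ≤ C := le_max_right _ _
    · -- t > 0
      have hmem : (t⁻¹ • X) ∈ S := by
        constructor
        · intro j
          exact mul_nonneg (inv_nonneg.2 ht0) (hX0 j)
        · rw [Finset.sum_congr rfl fun j _ => rfl]
          have : ∑ j, (t⁻¹ • X) j = t⁻¹ * ∑ j, X j := by
            rw [Finset.mul_sum]
            rfl
          rw [this, ← ht, inv_mul_cancel₀ h.ne']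
      have hfX : f X = Fb := by
        rw [hf, hFb]
        refine Finset.sum_congr rfl fun k _ => ?_
        rw [hXb]
        rfl
      have hscale : f (t⁻¹ • X) = t⁻¹ * f X := by
        rw [hf, Finset.mul_sum]
        refine Finset.sum_congr rfl fun k _ => ?_
        rw [Matrix.mulVec_smul]
        show |(t⁻¹ • ((Rmat A).mulVec X)) k| = t⁻¹ * |((Rmat A).mulVec X) k|
        rw [Pi.smul_apply, smul_eq_mul, abs_mul, abs_of_nonneg (inv_nonneg.2 ht0)]
      have hge : c ≤ f (t⁻¹ • X) := hmin hmem
      rw [hscale, hfX] at hge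
      have htle : t ≤ Fb / c := by
        rw [le_div_iff₀ hcpos]
        calc t * c ≤ t * (t⁻¹ * Fb) := by
              apply mul_le_mul_of_nonneg_left hge ht0
        _ = Fb := by field_simp
      calc (x i : ℝ) = X i := rfl
      _ ≤ t := hxi_le_t
      _ ≤ Fb / c := htle
      _ ≤ C := le_max_left _ _
  -- conclude finiteness
  refine Set.Finite.subset (Set.finite_Icc (0 : Fin n → ℤ) (fun _ => ⌈C⌉)) ?_
  rintro x ⟨hx0, hxb⟩
  constructor
  · intro i; exact hx0 i
  · intro i
    have h1 : (x i : ℝ) ≤ C := key x hx0 hxb i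
    have h2 : C ≤ (⌈C⌉ : ℝ) := Int.le_ceil C
    exact_mod_cast h1.trans h2

lemma cover_nonempty (s : ℕ) (hmn : m < n) (hs : 1 ≤ s)
    (hgcd : Finset.univ.gcd (fun I : Fin m ↪ Fin n => (A.submatrix id ⇑I).det) = 1) :
    ∃ μ : ℝ, 0 < μ ∧ ∀ x ∈ Submodule.span ℝ (kerLat A),
      ∃ T : Finset (Fin n → ℝ), ↑T ⊆ kerLat A ∧ s ≤ T.card ∧
        ∀ y ∈ T, ∃ k ∈ ((fun x => x - fun _ => (1 : ℝ)) '' knap A (vA A)), x = y + μ • k := by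
  classical
  obtain ⟨I0, hD⟩ := exists_I0 A hgcd
  set D : ℤ := (A.submatrix id ⇑I0).det with hDdef
  set Jc : Finset (Fin n) := (Finset.univ.map I0)ᶜ with hJc
  have hJcne : Jc.Nonempty := by
    rw [← Finset.card_pos, hJc, Finset.card_compl, Finset.card_map]
    simp only [Finset.card_univ, Fintype.card_fin]
    omega
  obtain ⟨j0, hj0⟩ := hJcne
  set zR : Fin n → Fin n → ℝ := fun j j' => ((zKer A I0 j j' : ℤ) : ℝ) with hzR
  set Mz : ℝ := ∑ j ∈ Jc, ∑ j', |zR j j'| with hMz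
  set M0 : ℝ := ∑ j', |zR j0 j'| with hM0
  have hMz0 : 0 ≤ Mz := Finset.sum_nonneg fun j _ => Finset.sum_nonneg fun j' _ => abs_nonneg _
  have hM00 : 0 ≤ M0 := Finset.sum_nonneg fun j' _ => abs_nonneg _
  set μ : ℝ := Mz + s * M0 + 1 with hμ
  have hμpos : 0 < μ := by
    have : 0 ≤ (s : ℝ) * M0 := mul_nonneg (by positivity) hM00
    rw [hμ]; linarith
  refine ⟨μ, hμpos, ?_⟩
  intro x hx
  have hx0 : (Rmat A).mulVec x = 0 := span_kerLat_ker A x hx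
  set c : Fin n → ℝ := fun j => x j / (D : ℝ) with hcdef
  have hdecomp : x = ∑ j ∈ Jc, c j • Rvec (zKer A I0 j) := ker_decomp A I0 hD x hx0
  set y0 : Fin n → ℤ := fun j' => ∑ j ∈ Jc, ⌊c j⌋ * zKer A I0 j j' with hy0
  have hy0sum : y0 = ∑ j ∈ Jc, ⌊c j⌋ • zKer A I0 j := by
    funext j'
    rw [hy0, Finset.sum_apply]
    rfl
  have hAy0 : A.mulVec y0 = 0 := by
    rw [hy0sum, show A.mulVec _ = A.mulVecLin _ from rfl, map_sum]
    rw [Finset.sum_congr rfl fun j _ => by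
      rw [_root_.map_smul, show A.mulVecLin (zKer A I0 j) = A.mulVec (zKer A I0 j) from rfl,
        mulVec_zKer A I0 j, smul_zero]]
    exact Finset.sum_const_zero
  set yt : ℕ → (Fin n → ℤ) := fun t => y0 + (t : ℤ) • zKer A I0 j0 with hyt
  have hAyt : ∀ t, A.mulVec (yt t) = 0 := by
    intro t
    rw [hyt, Matrix.mulVec_add, Matrix.mulVec_smul, hAy0, mulVec_zKer, smul_zero, add_zero]
  have hz0j0 : zKer A I0 j0 j0 = D := by
    have hj0' : ¬ ∃ i, I0 i = j0 := by
      have := hj0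
      rw [hJc, Finset.mem_compl] at this
      simpa [Finset.mem_map] using this
    rw [zKer_outside A I0 j0 j0 hj0', if_pos rfl, mul_one, hDdef]
  -- the key coordinatewise bound
  have hbound : ∀ t : ℕ, t < s → ∀ j', |x j' - ((yt t j' : ℤ) : ℝ)| ≤ Mz + s * M0 := by
    intro t ht j'
    have hxj' : x j' = ∑ j ∈ Jc, c j * zR j j' := by
      conv_lhs => rw [hdecomp]
      rw [Finset.sum_apply]
      rfl
    have hytj' : ((yt t j' : ℤ) : ℝ) = (∑ j ∈ Jc, (⌊c j⌋ : ℝ) * zR j j') + (t : ℝ) * zR j0 j' := by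
      have hstep : yt t j' = (∑ j ∈ Jc, ⌊c j⌋ * zKer A I0 j j') + (t : ℤ) * zKer A I0 j0 j' := rfl
      rw [hstep]
      push_cast
      rfl
    rw [hxj', hytj']
    have hdiff : (∑ j ∈ Jc, c j * zR j j') - ((∑ j ∈ Jc, (⌊c j⌋ : ℝ) * zR j j') + (t : ℝ) * zR j0 j')
        = (∑ j ∈ Jc, (c j - ⌊c j⌋) * zR j j') - (t : ℝ) * zR j0 j' := by
      have e1 : ∑ j ∈ Jc, (c j - ⌊c j⌋) * zR j j'
          = ∑ j ∈ Jc, (c j * zR j j' - (⌊c j⌋ : ℝ) * zR j j') :=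
        Finset.sum_congr rfl fun j _ => by ring
      rw [e1, Finset.sum_sub_distrib]
      ring
    rw [hdiff]
    have h1 : |∑ j ∈ Jc, (c j - ⌊c j⌋) * zR j j'| ≤ Mz := by
      calc |∑ j ∈ Jc, (c j - ⌊c j⌋) * zR j j'| ≤ ∑ j ∈ Jc, |(c j - ⌊c j⌋) * zR j j'| :=
            Finset.abs_sum_le_sum_abs _ _
      _ ≤ ∑ j ∈ Jc, |zR j j'| := by
            refine Finset.sum_le_sum fun j _ => ?_
            rw [abs_mul]
            have hfr : |c j - ⌊c j⌋| ≤ 1 := by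
              have h1 := Int.fract_nonneg (c j)
              have h2 := Int.fract_lt_one (c j)
              rw [Int.fract] at h1 h2
              rw [abs_of_nonneg h1]
              linarith
            calc |c j - ⌊c j⌋| * |zR j j'| ≤ 1 * |zR j j'| :=
                  mul_le_mul_of_nonneg_right hfr (abs_nonneg _)
            _ = |zR j j'| := one_mul _
      _ ≤ Mz := by
            rw [hMz]
            refine Finset.sum_le_sum fun j _ => ?_
            exact Finset.single_le_sum (fun j'' _ => abs_nonneg (zR j j'')) (Finset.mem_univ j')
    have h2 : |(t : ℝ) * zR j0 j'| ≤ s * M0 := by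
      rw [abs_mul, abs_of_nonneg (by positivity : (0:ℝ) ≤ (t:ℝ))]
      have ht' : (t : ℝ) ≤ (s : ℝ) := by exact_mod_cast ht.le
      have hz' : |zR j0 j'| ≤ M0 :=
        Finset.single_le_sum (fun j'' _ => abs_nonneg (zR j0 j'')) (Finset.mem_univ j')
      exact mul_le_mul ht' hz' (abs_nonneg _) (by positivity)
    calc |(∑ j ∈ Jc, (c j - ⌊c j⌋) * zR j j') - (t : ℝ) * zR j0 j'|
        ≤ |∑ j ∈ Jc, (c j - ⌊c j⌋) * zR j j'| + |(t : ℝ) * zR j0 j'| := abs_sub _ _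
    _ ≤ Mz + s * M0 := add_le_add h1 h2
  -- build the finset
  set g : ℕ → (Fin n → ℝ) := fun t => Rvec (yt t) with hg
  have hginj : Function.Injective g := by
    intro t1 t2 h12
    have := congrFun h12 j0
    rw [hg] at this
    simp only [Rvec] at this
    have h' : ((yt t1 j0 : ℤ) : ℝ) = ((yt t2 j0 : ℤ) : ℝ) := this
    have h'' : yt t1 j0 = yt t2 j0 := by exact_mod_cast h'
    rw [hyt] at h''
    simp only [Pi.add_apply, Pi.smul_apply, smul_eq_mul] at h''
    have : (t1 : ℤ) * D = (t2 : ℤ) * D := by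
      rw [hz0j0] at h''
      omega
    have : (t1 : ℤ) = t2 := mul_right_cancel₀ hD this
    exact_mod_cast this
  refine ⟨(Finset.range s).image g, ?_, ?_, ?_⟩
  · intro y hy
    simp only [Finset.coe_image, Set.mem_image, Finset.mem_coe, Finset.mem_range] at hy
    obtain ⟨t, _, rfl⟩ := hy
    exact ⟨yt t, hAyt t, rfl⟩
  · rw [Finset.card_image_of_injective _ hginj, Finset.card_range]
  · intro y hy
    simp only [Finset.mem_image, Finset.mem_range] at hy
    obtain ⟨t, ht, rfl⟩ := hy
    refine ⟨μ⁻¹ • (x - Rvec (yt t)), ?_, ?_⟩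
    · rw [mem_K_iff]
      constructor
      · intro i
        have hb := hbound t ht i
        have : -(Mz + s * M0) ≤ x i - ((yt t i : ℤ) : ℝ) := neg_le_of_abs_le hb
        have hle : -(Mz + s * M0) ≥ -μ := by rw [hμ]; linarith
        rw [Pi.smul_apply, smul_eq_mul]
        have hxy : x i - Rvec (yt t) i = x i - ((yt t i : ℤ) : ℝ) := rfl
        have : -μ ≤ x i - Rvec (yt t) i := by rw [hxy]; linarith
        rw [show x i - Rvec (yt t) i = (x - Rvec (yt t)) i from rfl] at this
        calc (-1 : ℝ) = μ⁻¹ * (-μ) := by field_simp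
        _ ≤ μ⁻¹ * (x - Rvec (yt t)) i := by
              apply mul_le_mul_of_nonneg_left this (inv_nonneg.2 hμpos.le)
      · rw [Matrix.mulVec_smul, Matrix.mulVec_sub, hx0, Rmat_mulVec, hAyt]
        funext k
        simp [Rvec]
    · rw [hg, smul_smul, mul_inv_cancel₀ hμpos.ne', one_smul]
      ring_nf

end Aux

/-- g_s(A) is at most the s-covering radius of P(A,v) − 1 w.r.t. L_A^⊥ (Lemma 1). -/
theorem stmt_5 {m n : ℕ} (hm : 1 ≤ m) (hmn : m < n) (s : ℕ) (hs : 1 ≤ s)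
    (A : Matrix (Fin m) (Fin n) ℤ) (hA : regular A) :
    gFrob s A ≤ muCov s ((fun x => x - fun _ => (1 : ℝ)) '' knap A (vA A)) (kerLat A) := by
  classical
  set K : Set (Fin n → ℝ) := ((fun x => x - fun _ => (1 : ℝ)) '' knap A (vA A)) with hK
  set Sset : Set ℝ := {μ : ℝ | 0 < μ ∧ ∀ x ∈ Submodule.span ℝ (kerLat A),
    ∃ T : Finset (Fin n → ℝ), ↑T ⊆ kerLat A ∧ s ≤ T.card ∧
      ∀ y ∈ T, ∃ k ∈ K, x = y + μ • k} with hSset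
  set Tset : Set ℝ := {t : ℝ | 0 ≤ t ∧
    ∀ b : Fin m → ℤ, Rvec b ∈ interior ((fun c => t • vA A + c) '' coneOf A) → b ∈ feas s A}
    with hTset
  obtain ⟨I0, hD⟩ := exists_I0 A hA.1
  have hST : Sset ⊆ Tset := by
    rintro μ ⟨hμpos, hcov⟩
    refine ⟨hμpos.le, ?_⟩
    intro b hb
    -- extract the membership (interior ⊆ set)
    obtain ⟨cvec, ⟨r, hr0, hrA⟩, hcb⟩ := interior_subset hb
    -- the real solution x*
    set xs : Fin n → ℝ := μ • (fun _ => (1:ℝ)) + r with hxs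
    have hxsA : (Rmat A).mulVec xs = Rvec b := by
      rw [hxs, Matrix.mulVec_add, Matrix.mulVec_smul, hrA,
        show (Rmat A).mulVec (fun _ => (1:ℝ)) = vA A from rfl]
      exact hcb
    have hxs_ge : ∀ i, μ ≤ xs i := by
      intro i
      have : xs i = μ * 1 + r i := rfl
      rw [this]
      linarith [hr0 i]
    -- integer solution
    obtain ⟨w, hw⟩ := exists_int_solution A hA.1 b
    -- the difference lies in the span of the kernel lattice
    set d : Fin n → ℝ := Rvec w - xs with hd
    have hdker : (Rmat A).mulVec d = 0 := by
      rw [hd, Matrix.mulVec_sub, Rmat_mulVec, hw, hxsA, sub_self]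
    have hdspan : d ∈ Submodule.span ℝ (kerLat A) := ker_mem_span A I0 hD d hdker
    obtain ⟨T, hTsub, hTcard, hTcov⟩ := hcov d hdspan
    -- map each lattice point to an integer solution
    set F : (Fin n → ℝ) → (Fin n → ℤ) :=
      fun y => if h : y ∈ kerLat A then w - h.choose else 0 with hF
    have hFz : ∀ y ∈ T, A.mulVec (F y) = b ∧ Rvec (F y) = Rvec w - y := by
      intro y hy
      have hyL : y ∈ kerLat A := hTsub hy
      have hch := hyL.choose_spec
      rw [hF]
      simp only [dif_pos hyL]
      constructor
      · rw [Matrix.mulVec_sub, hw, hch.1, sub_zero]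
      · funext i
        have hyi : y i = ((hyL.choose i : ℤ) : ℝ) := congrFun hch.2 i
        show ((w i - hyL.choose i : ℤ) : ℝ) = (w i : ℝ) - y i
        rw [hyi]
        push_cast
        ring
    have hFsol : ∀ y ∈ T, (∀ i, 0 ≤ F y i) ∧ A.mulVec (F y) = b := by
      intro y hy
      refine ⟨?_, (hFz y hy).1⟩
      obtain ⟨k, hkK, hdk⟩ := hTcov y hy
      obtain ⟨hk1, _⟩ := (mem_K_iff A k).1 hkK
      intro i
      have h1 : Rvec (F y) i = Rvec w i - y i := by rw [(hFz y hy).2]; rfl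
      have h2 : d i = y i + μ * k i := by rw [hdk]; rfl
      have h3 : d i = Rvec w i - xs i := rfl
      have h4 : Rvec (F y) i = xs i + μ * k i := by
        rw [h1]
        have := h3 ▸ h2
        linarith
      have h5 : (0:ℝ) ≤ Rvec (F y) i := by
        rw [h4]
        have hki := hk1 i
        have := hxs_ge i
        nlinarith
      have h6 : (0:ℝ) ≤ ((F y i : ℤ) : ℝ) := h5
      exact_mod_cast h6
    have hFinj : Set.InjOn F ↑T := by
      intro y1 hy1 y2 hy2 h12
      have hy1L : y1 ∈ kerLat A := hTsub hy1
      have hy2L : y2 ∈ kerLat A := hTsub hy2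
      have e1 : Rvec (F y1) = Rvec w - y1 := (hFz y1 hy1).2
      have e2 : Rvec (F y2) = Rvec w - y2 := (hFz y2 hy2).2
      rw [h12] at e1
      rw [e1] at e2
      funext i
      have := congrFun e2 i
      simp only [Pi.sub_apply] at this
      linarith
    show b ∈ feas s A
    have hfin := sol_finite A (by omega) hA.2 b
    have hsub : ↑(T.image F) ⊆ {x : Fin n → ℤ | (∀ i, 0 ≤ x i) ∧ A.mulVec x = b} := by
      intro u hu
      simp only [Finset.coe_image, Set.mem_image, Finset.mem_coe] at hu
      obtain ⟨y, hy, rfl⟩ := hu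
      exact hFsol y hy
    have hcard : (T.image F).card = T.card := Finset.card_image_of_injOn hFinj
    have : s ≤ Set.ncard {x : Fin n → ℤ | (∀ i, 0 ≤ x i) ∧ A.mulVec x = b} := by
      calc s ≤ T.card := hTcard
      _ = (T.image F).card := hcard.symm
      _ = (↑(T.image F) : Set (Fin n → ℤ)).ncard := (Set.ncard_coe_finset _).symm
      _ ≤ _ := Set.ncard_le_ncard hsub hfin
    exact this
  have hSne : Sset.Nonempty := by
    obtain ⟨μ, h1, h2⟩ := cover_nonempty A s hmn hs hA.1
    exact ⟨μ, h1, h2⟩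
  show sInf Tset ≤ sInf Sset
  exact csInf_le_csInf ⟨0, fun t ht => ht.1⟩ hSne hST

end
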